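/- There exists a connected edge-labelled acyclic directed multigraph G with subgraphs G'₁, G'₂ and G''₁ such that V(G) = V(G'₁) ∪ V(G'₂) but V(G''₁) ≠ V(G), and G is not isomorphic to (G/V(G'₁)/V(G'₂)) ⧅ (G/V(G''₁)); in particular, the hypothesis V(G) = ⋃ⱼ V(G''ⱼ) in the Cartesian decomposition theorem cannot be dropped. -/

import Mathlib

noncomputable section

/-- An edge-labelled directed multigraph: arcs `A`, vertices `V`, labels `L`,
with incidence functions `tail`, `head` and labelling `label`. -/
structure LGraph (V : Type*) (A : Type*) (L : Type*) where
  tail : A → V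
  head : A → V
  label : A → L

variable {V V₁ V₂ W A A₁ A₂ B L : Type*}

/-- A label-preserving isomorphism of edge-labelled directed multigraphs. -/
structure LIso (G : LGraph V A L) (H : LGraph W B L) where
  vEquiv : V ≃ W
  aEquiv : A ≃ B
  map_tail : ∀ a, H.tail (aEquiv a) = vEquiv (G.tail a)
  map_head : ∀ a, H.head (aEquiv a) = vEquiv (G.head a)
  map_label : ∀ a, H.label (aEquiv a) = G.label a

/-- The arc (step) relation of a directed multigraph. -/
def LGraph.arcRel (G : LGraph V A L) (u w : V) : Prop :=
  ∃ a, G.tail a = u ∧ G.head a = w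

/-- A graph is acyclic if it has no directed cycle. -/
def LGraph.Acyclic (G : LGraph V A L) : Prop :=
  ∀ v, ¬ Relation.TransGen G.arcRel v v

/-- Adjacency in the underlying undirected multigraph. -/
def LGraph.adj (G : LGraph V A L) (u w : V) : Prop :=
  ∃ a, (G.tail a = u ∧ G.head a = w) ∨ (G.tail a = w ∧ G.head a = u)

/-- Connectivity of the underlying undirected multigraph. -/
def LGraph.Connected (G : LGraph V A L) : Prop :=
  Nonempty V ∧ ∀ u w : V, Relation.ReflTransGen G.adj u w

/-- Number of vertices of a graph. -/
def vertCard {V A L : Type*} (_G : LGraph V A L) : ℕ := Nat.card V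

/-- Number of arcs of a graph. -/
def arcCard {V A L : Type*} (_G : LGraph V A L) : ℕ := Nat.card A

/-- The quotient map used in contraction: vertices in `X` go to the new
vertex `none`, the others to themselves. -/
def contractProj (X : Set V) (v : V) : Option {v : V // v ∉ X} :=
  letI := Classical.dec (v ∈ X)
  if h : v ∈ X then none else some ⟨v, h⟩

/-- Contraction `G/X`: replace `X` by a single new vertex (`none`), delete the
arcs with both ends in `X`, redirect boundary arcs, keeping labels. -/
def LGraph.contract (G : LGraph V A L) (X : Set V) :
    LGraph (Option {v : V // v ∉ X}) {a : A // G.tail a ∉ X ∨ G.head a ∉ X} L where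
  tail a := contractProj X (G.tail a.1)
  head a := contractProj X (G.head a.1)
  label a := G.label a.1

/-- Simultaneous (successive) contraction of the fibres of `f : V → ι`:
each fibre is replaced by a single vertex, arcs internal to a fibre are
deleted, boundary arcs are redirected, labels kept. -/
def LGraph.contractFamily {ι : Type*} (G : LGraph V A L) (f : V → ι) :
    LGraph ι {a : A // f (G.tail a) ≠ f (G.head a)} L where
  tail a := f (G.tail a.1)
  head a := f (G.head a.1)
  label a := G.label a.1

/-- Induced subgraph on a vertex set `S`: keep all arcs with both ends in `S`. -/
def LGraph.induce (G : LGraph V A L) (S : Set V) :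
    LGraph S {a : A // G.tail a ∈ S ∧ G.head a ∈ S} L where
  tail a := ⟨G.tail a.1, a.2.1⟩
  head a := ⟨G.head a.1, a.2.2⟩
  label a := G.label a.1

/-- The Cartesian product of two edge-labelled directed multigraphs. -/
def cartProd (G₁ : LGraph V₁ A₁ L) (G₂ : LGraph V₂ A₂ L) :
    LGraph (V₁ × V₂) (A₁ × V₂ ⊕ A₂ × V₁) L where
  tail x := Sum.elim (fun p => (G₁.tail p.1, p.2)) (fun p => (p.2, G₂.tail p.1)) x
  head x := Sum.elim (fun p => (G₁.head p.1, p.2)) (fun p => (p.2, G₂.head p.1)) x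
  label x := Sum.elim (fun p => G₁.label p.1) (fun p => G₂.label p.1) x

/-- An arc of the Cartesian product is asynchronous if its label is not shared
by the other factor. -/
def Asynchronous (G₁ : LGraph V₁ A₁ L) (G₂ : LGraph V₂ A₂ L) (x : A₁ × V₂ ⊕ A₂ × V₁) : Prop :=
  Sum.elim (fun p => ∀ b : A₂, G₂.label b ≠ G₁.label p.1)
           (fun p => ∀ a : A₁, G₁.label a ≠ G₂.label p.1) x

/-- The intermediate product `G₁ ⊠ G₂`: asynchronous Cartesian arcs together
with one diagonal arc for each synchronising pair of arcs (same label). -/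
def interProd (G₁ : LGraph V₁ A₁ L) (G₂ : LGraph V₂ A₂ L) :
    LGraph (V₁ × V₂)
      ({x : A₁ × V₂ ⊕ A₂ × V₁ // Asynchronous G₁ G₂ x} ⊕
        {p : A₁ × A₂ // G₁.label p.1 = G₂.label p.2}) L where
  tail x := Sum.elim (fun y => (cartProd G₁ G₂).tail y.1)
      (fun p => (G₁.tail p.1.1, G₂.tail p.1.2)) x
  head x := Sum.elim (fun y => (cartProd G₁ G₂).head y.1)
      (fun p => (G₁.head p.1.1, G₂.head p.1.2)) x
  label x := Sum.elim (fun y => (cartProd G₁ G₂).label y.1) (fun p => G₁.label p.1.1) x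

/-- The set of vertices that survive the vertex-removal step of the VRSP:
the largest set `S` such that every vertex of `S` either is a source of the
Cartesian product or has an incoming intermediate-product arc from `S`.
(Vertices that become sources of the remaining intermediate product while not
being sources of the Cartesian product are removed one by one.) -/
def keptSet (G₁ : LGraph V₁ A₁ L) (G₂ : LGraph V₂ A₂ L) : Set (V₁ × V₂) :=
  ⋃₀ {S | ∀ v ∈ S, (¬ ∃ e, (cartProd G₁ G₂).head e = v) ∨
      ∃ e, (interProd G₁ G₂).head e = v ∧ (interProd G₁ G₂).tail e ∈ S}

/-- The vertex-removing synchronised product (VRSP) `G₁ ⧅ G₂`. -/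
def vrsp (G₁ : LGraph V₁ A₁ L) (G₂ : LGraph V₂ A₂ L) :
    LGraph (keptSet G₁ G₂)
      {e // (interProd G₁ G₂).tail e ∈ keptSet G₁ G₂ ∧
            (interProd G₁ G₂).head e ∈ keptSet G₁ G₂} L where
  tail e := ⟨(interProd G₁ G₂).tail e.1, e.2.1⟩
  head e := ⟨(interProd G₁ G₂).head e.1, e.2.2⟩
  label e := (interProd G₁ G₂).label e.1

/-- A subgraph of an edge-labelled directed multigraph. -/
structure LGraph.Subgraph (G : LGraph V A L) where
  verts : Set V
  arcs : Set A
  tail_mem : ∀ a ∈ arcs, G.tail a ∈ verts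
  head_mem : ∀ a ∈ arcs, G.head a ∈ verts

/-- A subgraph regarded as a graph in its own right. -/
def LGraph.Subgraph.toLGraph {G : LGraph V A L} (H : G.Subgraph) : LGraph H.verts H.arcs L where
  tail a := ⟨G.tail a.1, H.tail_mem a.1 a.2⟩
  head a := ⟨G.head a.1, H.head_mem a.1 a.2⟩
  label a := G.label a.1

/-- The labelled directed path with `m+1` vertices and arcs `vᵢ → vᵢ₊₁`
labelled `lab i`. -/
def pathGraph (m : ℕ) (lab : Fin m → L) : LGraph (Fin (m+1)) (Fin m) L where
  tail i := i.castSucc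
  head i := i.succ
  label := lab

/-! ### Auxiliary construction for the witness graph -/

def Gw : LGraph (Fin 4) (Fin 4) (Fin 2) where
  tail := ![0, 2, 0, 1]
  head := ![1, 3, 2, 3]
  label := ![0, 0, 1, 1]

def fw : Fin 4 → Fin 2 := ![0, 0, 1, 1]

def Xw : Set (Fin 4) := {v | fw v = 0}

instance (v : Fin 4) : Decidable (v ∈ Xw) := inferInstanceAs (Decidable (fw v = 0))

theorem contractProj_some {V : Type*} {X : Set V} {v : V} (h : v ∉ X) :
    contractProj X v = some ⟨v, h⟩ := by
  unfold contractProj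
  exact dif_neg h

abbrev A1w := {a : Fin 4 // fw (Gw.tail a) ≠ fw (Gw.head a)}
abbrev A2w := {a : Fin 4 // Gw.tail a ∉ Xw ∨ Gw.head a ∉ Xw}

theorem A1_cases (a : A1w) : a.1 = 2 ∨ a.1 = 3 := by
  obtain ⟨i, hi⟩ := a
  fin_cases i
  · exact absurd hi (by decide)
  · exact absurd hi (by decide)
  · exact Or.inl rfl
  · exact Or.inr rfl

theorem A2_cases (b : A2w) : b.1 = 1 ∨ b.1 = 2 ∨ b.1 = 3 := by
  obtain ⟨i, hi⟩ := b
  fin_cases i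
  · exact absurd hi (by decide)
  · exact Or.inl rfl
  · exact Or.inr (Or.inl rfl)
  · exact Or.inr (Or.inr rfl)

abbrev G1w := Gw.contractFamily fw
abbrev G2w := Gw.contract Xw

theorem no_async_inl (a : A1w) (v₂ : Option {v : Fin 4 // v ∉ Xw}) :
    ¬ Asynchronous G1w G2w (Sum.inl (a, v₂)) := by
  intro h
  have hb : G2w.label (⟨2, Or.inr (by decide)⟩ : A2w) = G1w.label a := by
    show Gw.label 2 = Gw.label a.1
    rcases A1_cases a with h' | h' <;> rw [h'] <;> rfl
  exact h ⟨2, Or.inr (by decide)⟩ hb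

theorem async_inr_b (b : A2w) (v₁ : Fin 2)
    (hx : Asynchronous G1w G2w (Sum.inr (b, v₁))) : b.1 = 1 := by
  rcases A2_cases b with h | h | h
  · exact h
  · exact absurd (show Gw.label 2 = Gw.label b.1 by rw [h]) (hx ⟨2, by decide⟩)
  · exact absurd (show Gw.label 2 = Gw.label b.1 by rw [h]; rfl) (hx ⟨2, by decide⟩)

theorem async_inr_head (b : A2w) (v₁ : Fin 2)
    (hx : Asynchronous G1w G2w (Sum.inr (b, v₁))) :
    ∃ (h3 : (3 : Fin 4) ∉ Xw) (h2 : (2 : Fin 4) ∉ Xw),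
      (cartProd G1w G2w).head (Sum.inr (b, v₁)) = (v₁, some ⟨3, h3⟩) ∧
      (cartProd G1w G2w).tail (Sum.inr (b, v₁)) = (v₁, some ⟨2, h2⟩) := by
  have hb := async_inr_b b v₁ hx
  refine ⟨by decide, by decide, ?_, ?_⟩
  · show (v₁, contractProj Xw (Gw.head b.1)) = _
    rw [hb]
    exact congrArg _ (contractProj_some _)
  · show (v₁, contractProj Xw (Gw.tail b.1)) = _
    rw [hb]
    exact congrArg _ (contractProj_some _)

theorem sync_head (a : A1w) (b : A2w) (hab : G1w.label a = G2w.label b) :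
    ∃ (w : Fin 4) (hw : w ∉ Xw),
      (interProd G1w G2w).head (Sum.inr ⟨(a, b), hab⟩) = (1, some ⟨w, hw⟩) := by
  have h2 : Gw.head b.1 ∉ Xw := by
    rcases A2_cases b with h | h | h <;> rw [h] <;> decide
  refine ⟨Gw.head b.1, h2, ?_⟩
  show (fw (Gw.head a.1), contractProj Xw (Gw.head b.1)) = _
  rw [contractProj_some h2]
  rcases A1_cases a with h | h <;> rw [h] <;> rfl

theorem kept_sub (v : Fin 2 × Option {x : Fin 4 // x ∉ Xw})
    (hv : v ∈ keptSet G1w G2w) :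
    v = ((0 : Fin 2), none) ∨ (∃ h, v = (1, some ⟨2, h⟩)) ∨
      (∃ h, v = (1, some ⟨3, h⟩)) := by
  obtain ⟨S, hS, hvS⟩ := hv
  replace hS : ∀ w ∈ S, (¬ ∃ e, (cartProd G1w G2w).head e = w) ∨
      ∃ e, (interProd G1w G2w).head e = w ∧ (interProd G1w G2w).tail e ∈ S := hS
  -- Claim A : (0, some 2) ∉ S
  have hA : ∀ (h2 : (2 : Fin 4) ∉ Xw), ((0 : Fin 2), some ⟨2, h2⟩) ∉ S := by
    intro h2 hmem
    rcases hS _ hmem with hno | ⟨e, hhead, -⟩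
    · exact hno ⟨Sum.inr (⟨2, Or.inr h2⟩, 0), congrArg _ (contractProj_some h2)⟩
    · rcases e with ⟨x, hx⟩ | ⟨⟨a, b⟩, hab⟩
      · rcases x with ⟨a, v₂⟩ | ⟨b, v₁⟩
        · exact no_async_inl a v₂ hx
        · obtain ⟨h3, h2', hh, -⟩ := async_inr_head b v₁ hx
          have : (interProd G1w G2w).head (Sum.inl ⟨Sum.inr (b, v₁), hx⟩) =
              (v₁, some ⟨3, h3⟩) := hh
          rw [this] at hhead
          have := congrArg Prod.snd hhead
          simp at this
      · obtain ⟨w, hw, hh⟩ := sync_head a b hab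
        rw [hh] at hhead
        have := congrArg Prod.fst hhead
        simp at this
  -- Claim B : (0, some 3) ∉ S
  have hB : ∀ (h3 : (3 : Fin 4) ∉ Xw), ((0 : Fin 2), some ⟨3, h3⟩) ∉ S := by
    intro h3 hmem
    rcases hS _ hmem with hno | ⟨e, hhead, htail⟩
    · exact hno ⟨Sum.inr (⟨3, Or.inr h3⟩, 0), congrArg _ (contractProj_some h3)⟩
    · rcases e with ⟨x, hx⟩ | ⟨⟨a, b⟩, hab⟩
      · rcases x with ⟨a, v₂⟩ | ⟨b, v₁⟩
        · exact no_async_inl a v₂ hx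
        · obtain ⟨h3', h2', hh, ht⟩ := async_inr_head b v₁ hx
          have hh' : (interProd G1w G2w).head (Sum.inl ⟨Sum.inr (b, v₁), hx⟩) =
              (v₁, some ⟨3, h3'⟩) := hh
          rw [hh'] at hhead
          have hv1 : v₁ = 0 := congrArg Prod.fst hhead
          have ht' : (interProd G1w G2w).tail (Sum.inl ⟨Sum.inr (b, v₁), hx⟩) =
              (v₁, some ⟨2, h2'⟩) := ht
          rw [ht', hv1] at htail
          exact hA h2' htail
      · obtain ⟨w, hw, hh⟩ := sync_head a b hab
        rw [hh] at hhead
        have := congrArg Prod.fst hhead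
        simp at this
  -- Claim C : (1, none) ∉ S
  have hC : ((1 : Fin 2), (none : Option {x : Fin 4 // x ∉ Xw})) ∉ S := by
    intro hmem
    rcases hS _ hmem with hno | ⟨e, hhead, -⟩
    · exact hno ⟨Sum.inl (⟨2, by decide⟩, none), rfl⟩
    · rcases e with ⟨x, hx⟩ | ⟨⟨a, b⟩, hab⟩
      · rcases x with ⟨a, v₂⟩ | ⟨b, v₁⟩
        · exact no_async_inl a v₂ hx
        · obtain ⟨h3, h2', hh, -⟩ := async_inr_head b v₁ hx
          have : (interProd G1w G2w).head (Sum.inl ⟨Sum.inr (b, v₁), hx⟩) =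
              (v₁, some ⟨3, h3⟩) := hh
          rw [this] at hhead
          have := congrArg Prod.snd hhead
          simp at this
      · obtain ⟨w, hw, hh⟩ := sync_head a b hab
        rw [hh] at hhead
        have := congrArg Prod.snd hhead
        simp at this
  -- now case on v
  obtain ⟨v₁, v₂⟩ := v
  match v₂ with
  | none =>
    fin_cases v₁
    · exact Or.inl rfl
    · exact absurd hvS hC
  | some ⟨w, hw⟩ =>
    fin_cases w
    · exact absurd hw (by decide)
    · exact absurd hw (by decide)
    · fin_cases v₁
      · exact absurd hvS (hA hw)
      · exact Or.inr (Or.inl ⟨hw, rfl⟩)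
    · fin_cases v₁
      · exact absurd hvS (hB hw)
      · exact Or.inr (Or.inr ⟨hw, rfl⟩)

def gw : Fin 2 × Option {v : Fin 4 // v ∉ Xw} → Fin 3
  | (_, none) => 0
  | (_, some ⟨w, _⟩) => if w = 2 then 1 else 2

/-- there is a connected acyclic edge-labelled directed
multigraph `G` with subgraphs `G'₁, G'₂, G''₁` such that
`V(G) = V(G'₁) ∪ V(G'₂)` (the successive contraction of `V(G'₁)`, `V(G'₂)` is
encoded by the quotient map `f`) but `V(G''₁) ≠ V(G)`, and `G` is not
isomorphic to `(G/V(G'₁)/V(G'₂)) ⧅ (G/V(G''₁))`: the hypothesis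
`V(G) = ⋃ⱼ V(G''ⱼ)` of the Cartesian decomposition theorem cannot be
dropped. -/
theorem decomposition_hypothesis_necessary :
    ∃ (G : LGraph (Fin 4) (Fin 4) (Fin 2)) (G'₁ G'₂ G''₁ : G.Subgraph)
      (f : Fin 4 → Fin 2),
      G.Connected ∧ G.Acyclic ∧
      (∀ v, v ∈ G'₁.verts ↔ f v = 0) ∧
      (∀ v, v ∈ G'₂.verts ↔ f v = 1) ∧
      G'₁.verts ∪ G'₂.verts = Set.univ ∧
      G''₁.verts.Nonempty ∧ G''₁.verts ≠ Set.univ ∧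
      IsEmpty (LIso G (vrsp (G.contractFamily f) (G.contract G''₁.verts))) := by
  refine ⟨Gw, ⟨{v | fw v = 0}, ∅, by simp, by simp⟩, ⟨{v | fw v = 1}, ∅, by simp, by simp⟩,
    ⟨Xw, ∅, by simp, by simp⟩, fw, ?_, ?_, fun v => Iff.rfl, fun v => Iff.rfl, ?_,
    ⟨0, rfl⟩, ?_, ?_⟩
  · -- connected
    have hsym : Symmetric Gw.adj := fun u w ⟨a, h⟩ => ⟨a, h.symm⟩
    have reach : ∀ v : Fin 4, Relation.ReflTransGen Gw.adj 0 v := by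
      intro v
      fin_cases v
      · exact .refl
      · exact .single ⟨0, Or.inl ⟨rfl, rfl⟩⟩
      · exact .single ⟨2, Or.inl ⟨rfl, rfl⟩⟩
      · exact .tail (.single ⟨0, Or.inl ⟨rfl, rfl⟩⟩) ⟨3, Or.inl ⟨rfl, rfl⟩⟩
    exact ⟨⟨0⟩, fun u w => ((@Relation.ReflTransGen.stdSymm _ _ ⟨fun a b h => hsym h⟩).symm _ _ (reach u)).trans (reach w)⟩
  · -- acyclic
    intro v hv
    have hlt : ∀ u w : Fin 4, Gw.arcRel u w → u.val < w.val := by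
      rintro u w ⟨a, rfl, rfl⟩
      fin_cases a <;> decide
    have h2 : Relation.TransGen (fun x y : ℕ => x < y) v.val v.val :=
      Relation.TransGen.lift Fin.val (fun a b h => hlt a b h) _ _ hv
    rw [Relation.transGen_eq_self (r := fun x y : ℕ => x < y)] at h2
    exact lt_irrefl _ h2
  · -- union is univ
    apply Set.eq_univ_of_forall
    intro v
    fin_cases v
    · exact Or.inl rfl
    · exact Or.inl rfl
    · exact Or.inr rfl
    · exact Or.inr rfl
  · -- Xw ≠ univ
    intro h
    have h2 : (2 : Fin 4) ∈ Xw := by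
      rw [show Xw = Set.univ from h]
      trivial
    exact absurd h2 (by decide)
  · -- no isomorphism
    constructor
    intro iso
    have e : Fin 4 ≃ keptSet G1w G2w := iso.vEquiv
    have hginj : Function.Injective (fun i : Fin 4 => gw (e i).1) := by
      intro x y hxy
      have hx := kept_sub _ (e x).2
      have hy := kept_sub _ (e y).2
      apply e.injective
      apply Subtype.ext
      simp only at hxy
      rcases hx with h | ⟨p, h⟩ | ⟨p, h⟩ <;> rcases hy with h' | ⟨p', h'⟩ | ⟨p', h'⟩ <;>
          rw [h, h'] <;> rw [h, h'] at hxy <;>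
        first
          | rfl
          | (exfalso; revert hxy; simp [gw])
    have hcard := Fintype.card_le_of_injective _ hginj
    simp at hcard
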